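/- Let f: K → ℝ be a discrete Morse function on a connected finite simplicial complex with two distinct critical vertices v₀ and v₁ with f(v₀) < f(v₁). Then f has a critical edge e with f(e) > f(v₁). (Discrete Mountain Pass Lemma, consequence form.) -/

import Mathlib

open Finset

noncomputable section

attribute [local instance] Classical.propDecidable

/-- A finite abstract simplicial complex on vertex type `V`. -/
structure SComplex (V : Type*) [LinearOrder V] where
  cells : Finset (Finset V)
  nonempty_of_mem : ∀ σ ∈ cells, σ.Nonempty
  down_closed : ∀ σ ∈ cells, ∀ τ ⊆ σ, τ.Nonempty → τ ∈ cells

variable {V : Type*} [LinearOrder V]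

/-- `U(σ)`: immediate cofaces of `σ` in `K` with not-larger `f`-value. -/
def Uset (f : Finset V → ℝ) (K : SComplex V) (σ : Finset V) : Finset (Finset V) :=
  K.cells.filter fun τ => σ ⊂ τ ∧ τ.card = σ.card + 1 ∧ f τ ≤ f σ

/-- `L(σ)`: immediate faces of `σ` in `K` with not-smaller `f`-value. -/
def Lset (f : Finset V → ℝ) (K : SComplex V) (σ : Finset V) : Finset (Finset V) :=
  K.cells.filter fun γ => γ ⊂ σ ∧ σ.card = γ.card + 1 ∧ f σ ≤ f γ

/-- `f` is a discrete Morse function on `K`. -/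
def IsDMF (f : Finset V → ℝ) (K : SComplex V) : Prop :=
  ∀ σ ∈ K.cells, (Uset f K σ).card ≤ 1 ∧ (Lset f K σ).card ≤ 1

/-- A critical cell of `f`. -/
def IsCriticalCell (f : Finset V → ℝ) (K : SComplex V) (σ : Finset V) : Prop :=
  σ ∈ K.cells ∧ Uset f K σ = ∅ ∧ Lset f K σ = ∅

def IsCriticalValue (f : Finset V → ℝ) (K : SComplex V) (c : ℝ) : Prop :=
  ∃ σ, IsCriticalCell f K σ ∧ f σ = c

def IsRegularValue (f : Finset V → ℝ) (K : SComplex V) (a : ℝ) : Prop :=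
  ¬ IsCriticalValue f K a

/-- `{σ < τ}` is a pair of the gradient vector field `V = -∇f`. -/
def GradPair (f : Finset V → ℝ) (K : SComplex V) (σ τ : Finset V) : Prop :=
  σ ∈ K.cells ∧ τ ∈ K.cells ∧ σ ⊂ τ ∧ τ.card = σ.card + 1 ∧ f τ ≤ f σ

/-- The sublevel (level sub-)complex `K^a`: all cells with `f`-value ≤ a and their faces. -/
def subcx (f : Finset V → ℝ) (K : SComplex V) (a : ℝ) : Finset (Finset V) :=
  K.cells.filter fun σ => ∃ τ ∈ K.cells, σ ⊆ τ ∧ f τ ≤ a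

/-- The sublevel set `L^a = {σ ∈ K : f σ ≤ a}` (no closure). -/
def sublevelSet (f : Finset V → ℝ) (K : SComplex V) (a : ℝ) : Finset (Finset V) :=
  K.cells.filter fun σ => f σ ≤ a

/-- One elementary collapse: remove a free pair `σ < τ`. -/
def ElemCollapse (C D : Finset (Finset V)) : Prop :=
  ∃ σ τ : Finset V, σ ∈ C ∧ τ ∈ C ∧ σ ⊂ τ ∧ τ.card = σ.card + 1 ∧
    (∀ ρ ∈ C, σ ⊂ ρ → ρ = τ) ∧ D = (C.erase σ).erase τ

/-- `C` collapses onto `D`. -/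
def Collapses (C D : Finset (Finset V)) : Prop :=
  Relation.ReflTransGen ElemCollapse C D

/-- `L` is a subcomplex of `K`. -/
def IsSubcomplexOf (L : Finset (Finset V)) (K : SComplex V) : Prop :=
  L ⊆ K.cells ∧ ∀ σ ∈ L, ∀ τ ⊆ σ, τ.Nonempty → τ ∈ L

/-- A complex (given as its finset of cells) is collapsible: it collapses to a vertex. -/
def CollapsibleCx (L : Finset (Finset V)) : Prop :=
  ∃ v : V, Collapses L {({v} : Finset V)}

/-- Boundary of an oriented simplex (vertices ordered by the linear order on `V`). -/
noncomputable def bdryCell (σ : Finset V) : Finset V →₀ ℤ :=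
  ∑ v ∈ σ, Finsupp.single (σ.erase v) ((-1 : ℤ) ^ ((σ.filter fun w => w < v).card))

/-- Boundary operator on chains. -/
noncomputable def bdry (c : Finset V →₀ ℤ) : Finset V →₀ ℤ :=
  c.sum fun σ n => n • bdryCell σ

/-- The gradient `V` as a chain map: `V(σ) = -⟨∂τ, σ⟩ τ` when `{σ < τ} ∈ V`, else 0. -/
noncomputable def gradOp (f : Finset V → ℝ) (K : SComplex V) (c : Finset V →₀ ℤ) :
    Finset V →₀ ℤ :=
  c.sum fun σ n => ∑ τ ∈ Uset f K σ, Finsupp.single τ (-(n * bdryCell τ σ))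

/-- The discrete flow operator `φ = Id + ∂V + V∂`. -/
noncomputable def flow (f : Finset V → ℝ) (K : SComplex V) (c : Finset V →₀ ℤ) :
    Finset V →₀ ℤ :=
  c + bdry (gradOp f K c) + gradOp f K (bdry c)

noncomputable def flowCell (f : Finset V → ℝ) (K : SComplex V) (σ : Finset V) :
    Finset V →₀ ℤ :=
  flow f K (Finsupp.single σ 1)

/-- `Φ(A)`: union of the supports of `φ(σ)` over `σ ∈ A`. -/
noncomputable def Phi (f : Finset V → ℝ) (K : SComplex V) (A : Finset (Finset V)) :
    Finset (Finset V) :=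
  A.biUnion fun σ => (flowCell f K σ).support

/-- `Φ̄(A)`: the subcomplex generated by `Φ(A)`. -/
noncomputable def PhiBar (f : Finset V → ℝ) (K : SComplex V) (A : Finset (Finset V)) :
    Finset (Finset V) :=
  (Phi f K A).biUnion fun σ => σ.powerset.filter fun τ => τ.Nonempty

/-- Min-max data `(𝓗, 𝓢)` for `f` on `K`. -/
def IsMinMaxData (f : Finset V → ℝ) (K : SComplex V)
    (H : Set (Finset (Finset V) → Finset (Finset V)))
    (S : Set (Finset (Finset V))) : Prop :=
  (∀ a : ℝ, IsRegularValue f K a →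
    ∃ ε > (0 : ℝ), ∃ h ∈ H, h (sublevelSet f K (a + ε)) ⊆ sublevelSet f K (a - ε)) ∧
  ∀ h ∈ H, ∀ s ∈ S, h s ∈ S

/-- `x` is the maximum value of `f` on the finite set `s`. -/
def IsMaxValOn (f : Finset V → ℝ) (s : Finset (Finset V)) (x : ℝ) : Prop :=
  (∃ σ ∈ s, f σ = x) ∧ ∀ σ ∈ s, f σ ≤ x

/-- Geometric precategory: `L` is covered by `m+1` subcomplexes collapsible in `K`. -/
def precatLE (K : SComplex V) (L : Finset (Finset V)) (m : ℕ) : Prop :=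
  ∃ U : Fin (m + 1) → Finset (Finset V),
    (∀ i, IsSubcomplexOf (U i) K ∧ CollapsibleCx (U i)) ∧ ∀ σ ∈ L, ∃ i, σ ∈ U i

/-- Discrete geometric category of `L` in `K`. -/
noncomputable def dgcat (K : SComplex V) (L : Finset (Finset V)) : ℕ :=
  sInf {m | ∃ L', Collapses L L' ∧ precatLE K L' m}

/-- `σ` lies in the basin `A(v₀)`: some subcomplex of `K` containing `σ` collapses to `v₀`. -/
def InBasin (K : SComplex V) (v₀ : V) (σ : Finset V) : Prop :=
  ∃ L : Finset (Finset V), IsSubcomplexOf L K ∧ Collapses L {({v₀} : Finset V)} ∧ σ ∈ L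

/-- Edge-path connectivity of a complex given by its finset of cells. -/
def ConnectedIn (C : Finset (Finset V)) : Prop :=
  ∀ u v : V, ({u} : Finset V) ∈ C → ({v} : Finset V) ∈ C →
    ∃ (n : ℕ) (p : ℕ → V), p 0 = u ∧ p n = v ∧ ∀ i < n, ({p i, p (i + 1)} : Finset V) ∈ C

/-- Admissible edge path from critical vertex `v₁` ending in the basin of `v₀`. -/
def IsAdmissiblePath (f : Finset V → ℝ) (K : SComplex V) (v₀ v₁ : V)
    (E : Finset (Finset V)) : Prop :=
  ∃ (r : ℕ) (u : ℕ → V), 1 ≤ r ∧ u 0 = v₁ ∧ InBasin K v₀ ({u r} : Finset V) ∧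
    (∀ i < r, u i ≠ u (i + 1) ∧ ({u i, u (i + 1)} : Finset V) ∈ K.cells) ∧
    (∀ i ≤ r, IsCriticalCell f K ({u i} : Finset V) → u i = v₀ ∨ u i = v₁) ∧
    (∀ j, 1 ≤ j → j ≤ r → InBasin K v₀ ({u j} : Finset V) →
      ∀ i, j ≤ i → i < r →
        f ({u i, u (i + 1)} : Finset V) < f ({u (i - 1), u i} : Finset V)) ∧
    E = insert ({v₁} : Finset V)
      ((Finset.range r).image fun i => ({u i, u (i + 1)} : Finset V))

/-- The family `Γ_k` of the discrete Lusternik–Schnirelmann argument. -/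
def GammaFam (f : Finset V → ℝ) (K : SComplex V) (k : ℕ) : Set (Finset (Finset V)) :=
  {L | ∃ a : ℝ, Collapses (subcx f K a) L ∧ k - 1 ≤ dgcat K (subcx f K a)}

/-- A pair with a fixed decidability instance, to avoid instance mismatches. -/
private def pr (a b : V) : Finset V :=
  @insert V (Finset V) (@Finset.instInsert V (fun a b => Classical.propDecidable (a = b)))
    a {b}

private lemma mem_pr {x a b : V} : x ∈ pr a b ↔ x = a ∨ x = b := by
  simp [pr]

private lemma pr_comm (a b : V) : pr a b = pr b a := by
  ext w; simp [pr, or_comm]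

private lemma pr_card {a b : V} (h : a ≠ b) : (pr a b).card = 2 :=
  Finset.card_pair h

private lemma self_mem_pr_left (a b : V) : a ∈ pr a b := mem_pr.mpr (Or.inl rfl)
private lemma self_mem_pr_right (a b : V) : b ∈ pr a b := mem_pr.mpr (Or.inr rfl)

private lemma singleton_ssubset_pr {a b : V} (h : a ≠ b) :
    ({a} : Finset V) ⊂ pr a b := by
  refine Finset.ssubset_iff_subset_ne.mpr
    ⟨Finset.singleton_subset_iff.mpr (self_mem_pr_left a b), fun hEq => ?_⟩
  have : b ∈ ({a} : Finset V) := hEq ▸ self_mem_pr_right a b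
  exact h (Finset.mem_singleton.mp this).symm

private lemma card_two_pr {e : Finset V} (h : e.card = 2) :
    ∃ a b : V, a ≠ b ∧ e = pr a b := by
  obtain ⟨a, b, hab, hEq⟩ := Finset.card_eq_two.mp h
  refine ⟨a, b, hab, ?_⟩
  rw [hEq]; ext w; simp [pr]

/-- A step along an edge of value at most `t`. -/
private def EStep (f : Finset V → ℝ) (K : SComplex V) (t : ℝ) (u w : V) : Prop :=
  u ≠ w ∧ pr u w ∈ K.cells ∧ f (pr u w) ≤ t

/-- Connectivity at level `t`. -/
private def EConn (f : Finset V → ℝ) (K : SComplex V) (t : ℝ) : V → V → Prop :=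
  Relation.ReflTransGen (EStep f K t)

private lemma estep_mono {f : Finset V → ℝ} {K : SComplex V} {s t : ℝ} (hst : s ≤ t)
    {u w : V} (h : EStep f K s u w) : EStep f K t u w :=
  ⟨h.1, h.2.1, h.2.2.trans hst⟩

private lemma econn_mono {f : Finset V → ℝ} {K : SComplex V} {s t : ℝ} (hst : s ≤ t)
    {u w : V} (h : EConn f K s u w) : EConn f K t u w :=
  Relation.ReflTransGen.mono (fun _ _ hab => estep_mono hst hab) _ _ h

private lemma econn_symm {f : Finset V → ℝ} {K : SComplex V} {t : ℝ}
    {u w : V} (h : EConn f K t u w) : EConn f K t w u := by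
  have hsym : Symmetric (EStep f K t) := by
    intro a b hab
    refine ⟨hab.1.symm, ?_, ?_⟩
    · rw [pr_comm]; exact hab.2.1
    · rw [pr_comm]; exact hab.2.2
  haveI : Std.Symm (EStep f K t) := ⟨fun a b h => hsym h⟩
  exact Std.Symm.symm (r := Relation.ReflTransGen (EStep f K t)) _ _ h

/-- From any walk, the maximal edge value connects the endpoints and is an edge value. -/
private lemma exists_max_edge (f : Finset V → ℝ) (K : SComplex V)
    (R : V → V → Prop) (Q : ℝ → Prop)
    (hR : ∀ a b, R a b →
      ∃ s : ℝ, Q s ∧ (∃ e ∈ K.cells, e.card = 2 ∧ f e = s) ∧ EStep f K s a b)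
    {u w : V} (h : Relation.ReflTransGen R u w) (hne : u ≠ w) :
    ∃ s : ℝ, Q s ∧ (∃ e ∈ K.cells, e.card = 2 ∧ f e = s) ∧ EConn f K s u w := by
  revert hne
  induction h using Relation.ReflTransGen.head_induction_on with
  | refl => exact fun hne => absurd rfl hne
  | head h' hrest ih =>
    rename_i a c
    intro _
    obtain ⟨s, hQ, hE, hstep⟩ := hR _ _ h'
    by_cases hcw : c = w
    · subst hcw
      exact ⟨s, hQ, hE, Relation.ReflTransGen.single hstep⟩
    · obtain ⟨s', hQ', hE', hconn'⟩ := ih hcw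
      rcases le_total s s' with hle | hle
      · exact ⟨s', hQ', hE', Relation.ReflTransGen.head (estep_mono hle hstep) hconn'⟩
      · exact ⟨s, hQ, hE, Relation.ReflTransGen.head hstep (econn_mono hle hconn')⟩

private lemma rtg_of_path (S : V → V → Prop) :
    ∀ (n : ℕ) (p : ℕ → V), (∀ i < n, S (p i) (p (i + 1))) →
      Relation.ReflTransGen (fun a b => a ≠ b ∧ S a b) (p 0) (p n) := by
  intro n
  induction n with
  | zero => intro p _; exact Relation.ReflTransGen.refl
  | succ n ih =>
    intro p hp
    have h1 := ih p (fun i hi => hp i (Nat.lt_succ_of_lt hi))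
    by_cases heq : p n = p (n + 1)
    · exact heq ▸ h1
    · exact h1.tail ⟨heq, hp n (Nat.lt_succ_self n)⟩

theorem stmt10 (f : Finset V → ℝ) (K : SComplex V) (hf : IsDMF f K)
    (hinj : Set.InjOn f (K.cells : Set (Finset V))) (hconn : ConnectedIn K.cells)
    (v₀ v₁ : V) (hne : v₀ ≠ v₁)
    (h0 : IsCriticalCell f K ({v₀} : Finset V))
    (h1 : IsCriticalCell f K ({v₁} : Finset V))
    (hlt : f ({v₀} : Finset V) < f ({v₁} : Finset V)) :
    ∃ e ∈ K.cells, e.card = 2 ∧ IsCriticalCell f K e ∧ f ({v₁} : Finset V) < f e := by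
  classical
  have hv1K : ({v₁} : Finset V) ∈ K.cells := h1.1
  have hv0K : ({v₀} : Finset V) ∈ K.cells := h0.1
  obtain ⟨n, p, hp0, hpn, hpe⟩ := hconn v₀ v₁ hv0K hv1K
  have hpe' : ∀ i < n, pr (p i) (p (i + 1)) ∈ K.cells := by
    intro i hi
    have h := hpe i hi
    convert h using 2 <;> (ext w; simp [pr])
  have hrtg : Relation.ReflTransGen
      (fun a b => a ≠ b ∧ pr a b ∈ K.cells) v₀ v₁ := by
    have := rtg_of_path (fun a b => pr a b ∈ K.cells) n p hpe'
    rwa [hp0, hpn] at this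
  obtain ⟨s0, -, hs0E, hs0conn⟩ := exists_max_edge f K _ (fun _ => True)
    (fun a b h => ⟨f (pr a b), trivial, ⟨pr a b, h.2, pr_card h.1, rfl⟩,
      ⟨h.1, h.2, le_rfl⟩⟩) hrtg hne
  set T : Finset ℝ :=
    ((K.cells.filter fun e => e.card = 2).image f).filter
      (fun t => EConn f K t v₀ v₁) with hT
  have hmemT : ∀ {t : ℝ}, t ∈ T ↔
      (∃ e ∈ K.cells, e.card = 2 ∧ f e = t) ∧ EConn f K t v₀ v₁ := by
    intro t
    simp only [hT, Finset.mem_filter, Finset.mem_image]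
    constructor
    · rintro ⟨⟨e, ⟨heK, hcard⟩, hfe⟩, hc⟩
      exact ⟨⟨e, heK, hcard, hfe⟩, hc⟩
    · rintro ⟨⟨e, heK, hcard, hfe⟩, hc⟩
      exact ⟨⟨e, ⟨heK, hcard⟩, hfe⟩, hc⟩
  have hTne : T.Nonempty := ⟨s0, hmemT.mpr ⟨hs0E, hs0conn⟩⟩
  set t₀ := T.min' hTne with ht₀
  have ht₀T := T.min'_mem hTne
  obtain ⟨⟨e, heK, hecard, hfe⟩, hconnt⟩ := hmemT.mp ht₀T
  -- no strictly lower connection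
  have hnostrict : ¬ Relation.ReflTransGen
      (fun a b => a ≠ b ∧ pr a b ∈ K.cells ∧ f (pr a b) < t₀) v₀ v₁ := by
    intro h
    obtain ⟨s, hslt, hsE, hsconn⟩ := exists_max_edge f K _ (fun s => s < t₀)
      (fun a b h => ⟨f (pr a b), h.2.2, ⟨pr a b, h.2.1, pr_card h.1, rfl⟩,
        ⟨h.1, h.2.1, le_rfl⟩⟩) h hne
    have hmem : s ∈ T := hmemT.mpr ⟨hsE, hsconn⟩
    exact absurd (T.min'_le _ hmem) (not_le.mpr hslt)
  -- f v₁ < t₀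
  have hv1lt : f ({v₁} : Finset V) < t₀ := by
    have hsym := econn_symm hconnt
    have hcase := Relation.ReflTransGen.cases_head hsym
    obtain ⟨c, hstep, -⟩ := hcase.resolve_left (fun h => hne h.symm)
    obtain ⟨hne', hgK, hgle⟩ := hstep
    by_contra hcon
    push_neg at hcon
    have hU : pr v₁ c ∈ Uset f K ({v₁} : Finset V) := by
      simp only [Uset, Finset.mem_filter]
      refine ⟨hgK, singleton_ssubset_pr hne', ?_, le_trans hgle hcon⟩
      rw [pr_card hne', Finset.card_singleton]
    rw [h1.2.1] at hU
    exact Finset.notMem_empty _ hU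
  -- injectivity consequence
  have hltinj : ∀ g : Finset V, g ∈ K.cells → g ≠ e → f g ≤ t₀ → f g < t₀ := by
    intro g hgK hge hle
    rcases lt_or_eq_of_le hle with h | h
    · exact h
    · exact absurd (hinj hgK heK (h.trans hfe.symm)) hge
  -- Uset e = ∅
  have hUempty : Uset f K e = ∅ := by
    by_contra hU
    obtain ⟨τ, hτ⟩ := Finset.nonempty_iff_ne_empty.mpr hU
    simp only [Uset, Finset.mem_filter] at hτ
    obtain ⟨hτK, hssub, hτcard, hτle⟩ := hτ
    obtain ⟨x, y, hxy, hexy⟩ := card_two_pr hecard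
    obtain ⟨z, hzτ, hze⟩ := Finset.exists_of_ssubset hssub
    have hτle' : f τ ≤ t₀ := le_trans hτle (le_of_eq hfe)
    have hLτ : (Lset f K τ).card ≤ 1 := (hf τ hτK).2
    have heL : e ∈ Lset f K τ := by
      simp only [Lset, Finset.mem_filter]
      exact ⟨heK, Finset.ssubset_iff_subset_ne.mpr ⟨hssub.1, fun h => hze (h ▸ hzτ)⟩,
        hτcard, hτle⟩
    have hsmall : ∀ g : Finset V, g ⊆ τ → g.card = 2 → g ≠ e → f g < f τ := by
      intro g hgτ hgcard hge
      have hgK : g ∈ K.cells := K.down_closed τ hτK g hgτ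
        (Finset.card_pos.mp (by rw [hgcard]; norm_num))
      by_contra hcon
      push_neg at hcon
      have hgL : g ∈ Lset f K τ := by
        simp only [Lset, Finset.mem_filter]
        refine ⟨hgK, ?_, by rw [hτcard, hecard, hgcard], hcon⟩
        refine Finset.ssubset_iff_subset_ne.mpr ⟨hgτ, fun h => ?_⟩
        rw [← h, hgcard] at hτcard
        rw [hecard] at hτcard
        omega
      exact hge (Finset.card_le_one.mp hLτ g hgL e heL)
    have hxz : x ≠ z := fun h => hze (h ▸ (hexy ▸ self_mem_pr_left x y))
    have hyz : y ≠ z := fun h => hze (h ▸ (hexy ▸ self_mem_pr_right x y))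
    have hxτ : x ∈ τ := hssub.1 (hexy ▸ self_mem_pr_left x y)
    have hyτ : y ∈ τ := hssub.1 (hexy ▸ self_mem_pr_right x y)
    have he'τ : pr x z ⊆ τ := by
      intro w hw
      rcases mem_pr.mp hw with h | h
      · exact h ▸ hxτ
      · exact h ▸ hzτ
    have he''τ : pr y z ⊆ τ := by
      intro w hw
      rcases mem_pr.mp hw with h | h
      · exact h ▸ hyτ
      · exact h ▸ hzτ
    have he'ne : pr x z ≠ e := fun h => hze (h ▸ self_mem_pr_right x z)
    have he''ne : pr y z ≠ e := fun h => hze (h ▸ self_mem_pr_right y z)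
    have hfe' : f (pr x z) < t₀ :=
      lt_of_lt_of_le (hsmall _ he'τ (pr_card hxz) he'ne) hτle'
    have hfe'' : f (pr y z) < t₀ :=
      lt_of_lt_of_le (hsmall _ he''τ (pr_card hyz) he''ne) hτle'
    have he'K : pr x z ∈ K.cells :=
      K.down_closed τ hτK _ he'τ ⟨x, self_mem_pr_left x z⟩
    have he''K : pr y z ∈ K.cells :=
      K.down_closed τ hτK _ he''τ ⟨y, self_mem_pr_left y z⟩
    have hstrict : ∀ u w : V, EConn f K t₀ u w → Relation.ReflTransGen
        (fun a b => a ≠ b ∧ pr a b ∈ K.cells ∧ f (pr a b) < t₀) u w := by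
      intro u w h
      induction h with
      | refl => exact Relation.ReflTransGen.refl
      | tail hub hbc ih =>
        rename_i b c
        obtain ⟨hbc', hKbc, hlebc⟩ := hbc
        by_cases heq : pr b c = e
        · have hb : b = x ∨ b = y := mem_pr.mp (hexy ▸ heq ▸ self_mem_pr_left b c)
          have hc : c = x ∨ c = y := mem_pr.mp (hexy ▸ heq ▸ self_mem_pr_right b c)
          rcases hb with hb | hb <;> rcases hc with hc | hc
          · exact absurd (hb.trans hc.symm) hbc'
          · subst hb; subst hc
            exact (ih.tail ⟨hxz, he'K, hfe'⟩).tail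
              ⟨fun h => hyz h.symm, by rw [pr_comm]; exact he''K,
               by rw [pr_comm]; exact hfe''⟩
          · subst hb; subst hc
            exact (ih.tail ⟨hyz, he''K, hfe''⟩).tail
              ⟨fun h => hxz h.symm, by rw [pr_comm]; exact he'K,
               by rw [pr_comm]; exact hfe'⟩
          · exact absurd (hb.trans hc.symm) hbc'
        · exact ih.tail ⟨hbc', hKbc, hltinj _ hKbc heq hlebc⟩
    exact hnostrict (hstrict v₀ v₁ hconnt)
  -- Lset e = ∅
  have hLempty : Lset f K e = ∅ := by
    by_contra hL
    obtain ⟨γ, hγ⟩ := Finset.nonempty_iff_ne_empty.mpr hL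
    simp only [Lset, Finset.mem_filter] at hγ
    obtain ⟨hγK, hγssub, hγcard, hγle⟩ := hγ
    have hγ1 : γ.card = 1 := by rw [hecard] at hγcard; omega
    obtain ⟨x, hγx⟩ := Finset.card_eq_one.mp hγ1
    subst hγx
    have hxe : x ∈ e := hγssub.1 (Finset.mem_singleton_self x)
    obtain ⟨y, hxy, hexy⟩ : ∃ y, x ≠ y ∧ e = pr x y := by
      obtain ⟨a, b, hab, hEq⟩ := card_two_pr hecard
      rw [hEq] at hxe
      rcases mem_pr.mp hxe with h | h
      · subst h; exact ⟨b, hab, hEq⟩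
      · subst h; exact ⟨a, hab.symm, by rw [hEq, pr_comm]⟩
    have hfx : t₀ ≤ f ({x} : Finset V) := le_trans (le_of_eq hfe.symm) hγle
    have hUx1 : (Uset f K ({x} : Finset V)).card ≤ 1 := (hf _ hγK).1
    have heUx : e ∈ Uset f K ({x} : Finset V) := by
      simp only [Uset, Finset.mem_filter]
      refine ⟨heK, ?_, by rw [hecard, Finset.card_singleton], hγle⟩
      rw [hexy]; exact singleton_ssubset_pr hxy
    have hkey : ∀ g : Finset V, g ∈ K.cells → x ∈ g → g.card = 2 → f g ≤ t₀ → g = e := by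
      intro g hgK hxg hgcard hgle
      have hgUx : g ∈ Uset f K ({x} : Finset V) := by
        simp only [Uset, Finset.mem_filter]
        refine ⟨hgK, ?_, by rw [hgcard, Finset.card_singleton], le_trans hgle hfx⟩
        refine Finset.ssubset_iff_subset_ne.mpr
          ⟨Finset.singleton_subset_iff.mpr hxg, fun h => ?_⟩
        rw [← h, Finset.card_singleton] at hgcard
        omega
      exact Finset.card_le_one.mp hUx1 g hgUx e heUx
    have hxv0 : x ≠ v₀ := by
      intro h; subst h
      rw [h0.2.1] at heUx
      exact Finset.notMem_empty _ heUx
    have hxv1 : x ≠ v₁ := by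
      intro h; subst h
      rw [h1.2.1] at heUx
      exact Finset.notMem_empty _ heUx
    set r : V → V := fun z => if z = x then y else z with hr
    have hrne : ∀ z : V, z ≠ x → r z = z := fun z hz => if_neg hz
    have hstep'' : ∀ u w : V, EConn f K t₀ u w → Relation.ReflTransGen
        (fun a b => a ≠ b ∧ pr a b ∈ K.cells ∧ f (pr a b) < t₀) (r u) (r w) := by
      intro u w h
      induction h with
      | refl => exact Relation.ReflTransGen.refl
      | tail hub hbc ih =>
        rename_i b c
        obtain ⟨hbc', hKbc, hlebc⟩ := hbc
        have hry : r y = y := hrne y (fun h => hxy h.symm)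
        have hrx : r x = y := by simp [hr]
        by_cases hbx : b = x
        · have hxbc : x ∈ pr b c := by rw [← hbx]; exact self_mem_pr_left b c
          have hEq : pr b c = e := hkey _ hKbc hxbc (pr_card hbc') hlebc
          have hcy : c = y := by
            have hcmem : c ∈ pr x y := by
              rw [← hexy, ← hEq]; exact self_mem_pr_right b c
            rcases mem_pr.mp hcmem with h | h
            · exact absurd (h.trans hbx.symm) (Ne.symm hbc')
            · exact h
          have hb' : r b = y := by rw [hbx, hrx]
          have hc' : r c = y := by rw [hcy, hry]
          rw [hc']
          rw [hb'] at ih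
          exact ih
        · by_cases hcx : c = x
          · have hxbc : x ∈ pr b c := by rw [← hcx]; exact self_mem_pr_right b c
            have hEq : pr b c = e := hkey _ hKbc hxbc (pr_card hbc') hlebc
            have hby : b = y := by
              have hbmem : b ∈ pr x y := by
                rw [← hexy, ← hEq]; exact self_mem_pr_left b c
              rcases mem_pr.mp hbmem with h | h
              · exact absurd (h.trans hcx.symm) hbc'
              · exact h
            have hb' : r b = y := by rw [hby, hry]
            have hc' : r c = y := by rw [hcx, hrx]
            rw [hc']
            rw [hb'] at ih
            exact ih
          · have hne' : pr b c ≠ e := by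
              intro h
              have hxmem : x ∈ pr b c := by rw [h, hexy]; exact self_mem_pr_left x y
              rcases mem_pr.mp hxmem with h' | h'
              · exact hbx h'.symm
              · exact hcx h'.symm
            rw [hrne c hcx]
            rw [hrne b hbx] at ih
            exact ih.tail ⟨hbc', hKbc, hltinj _ hKbc hne' hlebc⟩
    have hwalk := hstep'' v₀ v₁ hconnt
    rw [hrne v₀ (fun h => hxv0 h.symm), hrne v₁ (fun h => hxv1 h.symm)] at hwalk
    exact hnostrict hwalk
  exact ⟨e, heK, hecard, ⟨heK, hUempty, hLempty⟩, lt_of_lt_of_le hv1lt (le_of_eq hfe.symm)⟩
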